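/- Fix an integer b ≥ 2 and constants β > 0 and η > 0. Let (ε_n)_{n≥2} be a sequence of positive reals with ε_n ≥ n^{−1/2}(log n)^{1/2+η} for every n ≥ 2, and for j ≥ 2 set S_j = ⌊exp((j (log j)^η)^{1/(1+2η)})⌋ and ρ_j = (log j)^{1+η}. Then the double series ∑_{j≥2} b^{j} b^{ρ_j} ∑_{n≥S_j} n b^{−β n ε_n^2} converges. -/

import Mathlib

/-- `S_j = ⌊exp((j (log j)^η)^{1/(1+2η)})⌋`. -/
noncomputable def Sgrowth (η : ℝ) (j : ℕ) : ℕ :=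
  ⌊Real.exp (((j : ℝ) * Real.log j ^ η) ^ ((1:ℝ) / (1 + 2 * η)))⌋₊

/-- The general term `n b^{-β n ε_n²}`. -/
noncomputable def termG (b : ℕ) (β : ℝ) (ε : ℕ → ℝ) (n : ℕ) : ℝ :=
  (n : ℝ) * (b : ℝ) ^ (-(β * (n : ℝ) * ε n ^ 2))

open Filter Real

noncomputable def xg (η : ℝ) (j : ℕ) : ℝ :=
  ((j : ℝ) * Real.log j ^ η) ^ ((1:ℝ) / (1 + 2 * η))

lemma Sgrowth_eq (η : ℝ) (j : ℕ) : Sgrowth η j = ⌊Real.exp (xg η j)⌋₊ := rfl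

/-- pointwise bound -/
lemma termG_le_aux (b : ℕ) (hb : 2 ≤ b) (β η : ℝ) (hβ : 0 < β) (hη : 0 < η)
    (ε : ℕ → ℝ)
    (hε : ∀ n : ℕ, 2 ≤ n →
      (n : ℝ) ^ (-(1:ℝ) / 2) * Real.log n ^ ((1:ℝ) / 2 + η) ≤ ε n)
    (n : ℕ) (hn : 2 ≤ n) :
    (n : ℝ) * (b : ℝ) ^ (-(β * (n : ℝ) * ε n ^ 2)) ≤
      (n : ℝ) * Real.exp (-(β * Real.log b) * Real.log n ^ (1 + 2 * η)) := by
  have hn' : (2:ℝ) ≤ (n:ℝ) := by exact_mod_cast hn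
  have npos : (0:ℝ) < n := by linarith
  have hlog : 0 < Real.log n := Real.log_pos (by linarith)
  have hbpos : (0:ℝ) < b := by positivity
  have hb1 : (1:ℝ) < b := by exact_mod_cast lt_of_lt_of_le one_lt_two hb
  have hL : 0 < Real.log b := Real.log_pos hb1
  rw [Real.rpow_def_of_pos hbpos]
  have key : Real.log n ^ (1 + 2*η) ≤ (n:ℝ) * ε n ^ 2 := by
    have h1 := hε n hn
    have h0 : (0:ℝ) ≤ (n : ℝ) ^ (-(1:ℝ) / 2) * Real.log n ^ ((1:ℝ) / 2 + η) := by positivity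
    have h2 := pow_le_pow_left₀ h0 h1 2
    have e1 : ((n:ℝ) ^ (-(1:ℝ)/2)) ^ 2 = (n:ℝ) ^ (-(1:ℝ)) := by
      rw [← Real.rpow_natCast ((n:ℝ) ^ (-(1:ℝ)/2)) 2, ← Real.rpow_mul npos.le]
      norm_num
    have e2 : (Real.log n ^ ((1:ℝ)/2 + η)) ^ 2 = Real.log n ^ (1 + 2*η) := by
      rw [← Real.rpow_natCast (Real.log n ^ ((1:ℝ)/2 + η)) 2, ← Real.rpow_mul hlog.le]
      ring_nf
    rw [mul_pow, e1, e2, Real.rpow_neg_one] at h2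
    calc Real.log n ^ (1 + 2*η) = (n:ℝ) * ((n:ℝ)⁻¹ * Real.log n ^ (1 + 2*η)) := by
          field_simp
      _ ≤ (n:ℝ) * ε n ^ 2 := by
          apply mul_le_mul_of_nonneg_left h2 npos.le
  apply mul_le_mul_of_nonneg_left _ npos.le
  rw [Real.exp_le_exp]
  calc Real.log b * -(β * n * ε n ^ 2) = -(β * Real.log b) * ((n:ℝ) * ε n ^ 2) := by ring
    _ ≤ -(β * Real.log b) * Real.log n ^ (1 + 2*η) := by
        apply mul_le_mul_of_nonpos_left key
        nlinarith

/-- summability of `n exp(-c (log n)^{1+q})`. -/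
lemma summable_nexp (c q : ℝ) (hc : 0 < c) (hq : 0 < q) :
    Summable (fun n : ℕ => (n : ℝ) * Real.exp (-c * Real.log n ^ (1 + q))) := by
  have hlim : Tendsto (fun n : ℕ => Real.log n ^ q) atTop atTop :=
    (tendsto_rpow_atTop hq).comp (Real.tendsto_log_atTop.comp tendsto_natCast_atTop_atTop)
  have hloglim : Tendsto (fun n : ℕ => Real.log n) atTop atTop :=
    Real.tendsto_log_atTop.comp tendsto_natCast_atTop_atTop
  apply summable_of_isBigO_nat (Real.summable_nat_rpow.2 (by norm_num : (-2:ℝ) < -1))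
  rw [Asymptotics.isBigO_iff]
  refine ⟨1, ?_⟩
  filter_upwards [hlim.eventually_ge_atTop (3 / c), hloglim.eventually_ge_atTop 1,
    eventually_ge_atTop 1] with n h1 h2 h3
  have hlpos : (0:ℝ) < Real.log n := by linarith
  have npos : (0:ℝ) < n := by exact_mod_cast h3
  have hXY : 3 * Real.log n ≤ c * Real.log n ^ (1 + q) := by
    have e : Real.log n ^ (1 + q) = Real.log n * Real.log n ^ q := by
      rw [Real.rpow_add hlpos, Real.rpow_one]
    rw [e]
    have := mul_le_mul_of_nonneg_left h1 hlpos.le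
    calc 3 * Real.log n = Real.log n * (3 / c) * c := by field_simp
      _ ≤ Real.log n * Real.log n ^ q * c := by
          apply mul_le_mul_of_nonneg_right this hc.le
      _ = c * (Real.log n * Real.log n ^ q) := by ring
  have hexp : Real.exp (-c * Real.log n ^ (1 + q)) ≤ (n:ℝ) ^ (-(3:ℝ)) := by
    rw [Real.rpow_def_of_pos npos]
    apply Real.exp_le_exp.2
    nlinarith
  have hfinal : (n:ℝ) * Real.exp (-c * Real.log n ^ (1 + q)) ≤ (n:ℝ) ^ (-(2:ℝ)) := by
    calc (n:ℝ) * Real.exp (-c * Real.log n ^ (1 + q)) ≤ (n:ℝ) * (n:ℝ) ^ (-(3:ℝ)) :=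
          mul_le_mul_of_nonneg_left hexp npos.le
      _ = (n:ℝ) ^ (-(2:ℝ)) := by
          have e : (n:ℝ) * (n:ℝ) ^ (-(3:ℝ)) = (n:ℝ) ^ ((1:ℝ) + -(3:ℝ)) := by
            rw [Real.rpow_add npos, Real.rpow_one]
          rw [e]; norm_num
  rw [Real.norm_eq_abs, Real.norm_eq_abs, one_mul,
    abs_of_nonneg (by positivity : (0:ℝ) ≤ (n:ℝ) * Real.exp (-c * Real.log n ^ (1 + q))),
    abs_of_nonneg (by positivity : (0:ℝ) ≤ (n:ℝ) ^ (-(2:ℝ)))]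
  exact hfinal

/-- log bound : `(log x)^{1+η} ≤ (1+η)^{1+η} x` for `x ≥ 1`. -/
lemma log_rpow_le (η : ℝ) (hη : 0 < η) (x : ℝ) (hx : 1 ≤ x) :
    Real.log x ^ (1 + η) ≤ (1 + η) ^ (1 + η) * x := by
  have hxpos : (0:ℝ) < x := by linarith
  have h1η : (0:ℝ) < 1 + η := by linarith
  have hlog_le : Real.log x ≤ (1 + η) * x ^ ((1:ℝ)/(1+η)) := by
    have h := Real.log_le_sub_one_of_pos (show (0:ℝ) < x ^ ((1:ℝ)/(1+η)) by positivity)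
    rw [Real.log_rpow hxpos] at h
    have h2 : (1:ℝ)/(1+η) * Real.log x ≤ x ^ ((1:ℝ)/(1+η)) := by linarith
    calc Real.log x = (1+η) * ((1/(1+η)) * Real.log x) := by field_simp
      _ ≤ (1+η) * x ^ ((1:ℝ)/(1+η)) := mul_le_mul_of_nonneg_left h2 h1η.le
  have hlognn : 0 ≤ Real.log x := Real.log_nonneg hx
  calc Real.log x ^ (1+η) ≤ ((1+η) * x ^ ((1:ℝ)/(1+η))) ^ (1+η) :=
        Real.rpow_le_rpow hlognn hlog_le h1η.le
    _ = (1+η)^(1+η) * x := by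
        rw [Real.mul_rpow h1η.le (by positivity), ← Real.rpow_mul hxpos.le,
          one_div, inv_mul_cancel₀ (ne_of_gt h1η), Real.rpow_one]

/-- If `ε_n ≥ n^{-1/2} (log n)^{1/2+η}`, `S_j = ⌊exp((j (log j)^η)^{1/(1+2η)})⌋` and
`ρ_j = (log j)^{1+η}`, then `∑_{j≥2} b^j b^{ρ_j} ∑_{n≥S_j} n b^{-β n ε_n²} < ∞`
(inner series summable for each `j ≥ 2`, and the outer series summable). -/
theorem double_series_converges_fast_eps
    (b : ℕ) (hb : 2 ≤ b) (β η : ℝ) (hβ : 0 < β) (hη : 0 < η)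
    (ε : ℕ → ℝ) (hεpos : ∀ n, 2 ≤ n → 0 < ε n)
    (hε : ∀ n : ℕ, 2 ≤ n →
      (n : ℝ) ^ (-(1:ℝ) / 2) * Real.log n ^ ((1:ℝ) / 2 + η) ≤ ε n) :
    (∀ j : ℕ, 2 ≤ j → Summable fun n : ℕ => termG b β ε (Sgrowth η j + n)) ∧
    Summable (fun j : ℕ => (b : ℝ) ^ (j + 2) *
      (b : ℝ) ^ (Real.log ((j : ℝ) + 2) ^ (1 + η)) *
      ∑' n : ℕ, termG b β ε (Sgrowth η (j + 2) + n)) := by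
  have hb1 : (1:ℝ) < b := by exact_mod_cast lt_of_lt_of_le one_lt_two hb
  have hbpos : (0:ℝ) < b := by positivity
  set L := Real.log b with hLdef
  have hL : 0 < L := Real.log_pos hb1
  set K := β * L with hKdef
  have hK : 0 < K := mul_pos hβ hL
  have htermle : ∀ n : ℕ, 2 ≤ n → termG b β ε n ≤
      (n:ℝ) * Real.exp (-K * Real.log n ^ (1 + 2*η)) :=
    fun n hn => termG_le_aux b hb β η hβ hη ε hε n hn
  have hterm_nonneg : ∀ n, 0 ≤ termG b β ε n := by
    intro n; unfold termG; positivity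
  have hg : Summable (fun n : ℕ => (n:ℝ) * Real.exp (-(K/2) * Real.log n ^ (1 + 2*η))) :=
    summable_nexp (K/2) (2*η) (by positivity) (by positivity)
  have hterm_le_g : ∀ n : ℕ, 2 ≤ n →
      termG b β ε n ≤ (n:ℝ) * Real.exp (-(K/2) * Real.log n ^ (1 + 2*η)) := by
    intro n hn
    refine (htermle n hn).trans
      (mul_le_mul_of_nonneg_left (Real.exp_le_exp.2 ?_) (Nat.cast_nonneg n))
    have h0 : 0 ≤ Real.log n ^ (1 + 2*η) :=
      Real.rpow_nonneg (Real.log_nonneg (by exact_mod_cast Nat.one_le_of_lt hn)) _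
    nlinarith
  have hsummable_termG : Summable (termG b β ε) := by
    apply summable_of_isBigO_nat hg
    rw [Asymptotics.isBigO_iff]
    refine ⟨1, ?_⟩
    filter_upwards [eventually_ge_atTop 2] with n hn
    rw [Real.norm_eq_abs, Real.norm_eq_abs, one_mul,
      abs_of_nonneg (hterm_nonneg n), abs_of_nonneg (by positivity)]
    exact hterm_le_g n hn
  have part1 : ∀ S : ℕ, Summable fun n : ℕ => termG b β ε (S + n) := by
    intro S
    have h := (summable_nat_add_iff S).2 hsummable_termG
    have e : (fun n : ℕ => termG b β ε (S + n)) = fun n => termG b β ε (n + S) := by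
      funext n; rw [Nat.add_comm]
    rw [e]; exact h
  refine ⟨fun j _ => part1 _, ?_⟩
  set C := ∑' n : ℕ, (n:ℝ) * Real.exp (-(K/2) * Real.log n ^ (1 + 2*η)) with hCdef
  have hC0 : 0 ≤ C := tsum_nonneg (fun n => by positivity)
  -- tail bound
  have tail_bound : ∀ j : ℕ, 2 ≤ xg η j →
      (∑' n : ℕ, termG b β ε (Sgrowth η j + n)) ≤
        Real.exp (-(K/2) * (xg η j - 1) ^ (1 + 2*η)) * C := by
    intro j hxj
    have hx1 : (1:ℝ) ≤ xg η j := by linarith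
    have hS : ∀ n : ℕ, Real.exp (xg η j - 1) ≤ ((Sgrowth η j + n : ℕ) : ℝ) := by
      intro n
      have h1 : Real.exp (xg η j) - 1 < ((Sgrowth η j : ℕ) : ℝ) := by
        rw [Sgrowth_eq]; exact Nat.sub_one_lt_floor _
      have h2 : Real.exp (xg η j - 1) ≤ Real.exp (xg η j) - 1 := by
        rw [Real.exp_sub, div_le_iff₀ (Real.exp_pos 1)]
        have h3 : Real.exp 1 ≤ Real.exp (xg η j) := Real.exp_le_exp.2 hx1
        nlinarith [Real.add_one_le_exp 1]
      push_cast
      have h4 : (0:ℝ) ≤ (n:ℝ) := Nat.cast_nonneg n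
      push_cast at h1
      linarith
    have hSlog : ∀ n : ℕ, xg η j - 1 ≤ Real.log ((Sgrowth η j + n : ℕ) : ℝ) := by
      intro n
      calc xg η j - 1 = Real.log (Real.exp (xg η j - 1)) := (Real.log_exp _).symm
        _ ≤ _ := Real.log_le_log (Real.exp_pos _) (hS n)
    have hn2 : ∀ n : ℕ, 2 ≤ Sgrowth η j + n := by
      intro n
      have h1 := hS n
      have h2 : Real.exp 1 ≤ Real.exp (xg η j - 1) := Real.exp_le_exp.2 (by linarith)
      have h3 : (2:ℝ) ≤ ((Sgrowth η j + n : ℕ):ℝ) := by nlinarith [Real.add_one_le_exp 1]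
      exact_mod_cast h3
    have hpt : ∀ n : ℕ, termG b β ε (Sgrowth η j + n) ≤
        Real.exp (-(K/2) * (xg η j - 1) ^ (1+2*η)) *
          (((Sgrowth η j + n : ℕ):ℝ) *
            Real.exp (-(K/2) * Real.log ((Sgrowth η j + n : ℕ):ℝ) ^ (1+2*η))) := by
      intro n
      have hA := htermle _ (hn2 n)
      have hX : (xg η j - 1) ^ (1+2*η) ≤ Real.log ((Sgrowth η j + n:ℕ):ℝ) ^ (1+2*η) :=
        Real.rpow_le_rpow (by linarith) (hSlog n) (by linarith)
      calc termG b β ε (Sgrowth η j + n)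
          ≤ ((Sgrowth η j + n:ℕ):ℝ) *
              Real.exp (-K * Real.log ((Sgrowth η j + n:ℕ):ℝ) ^ (1+2*η)) := hA
        _ = Real.exp (-(K/2) * Real.log ((Sgrowth η j + n:ℕ):ℝ) ^ (1+2*η)) *
              (((Sgrowth η j + n:ℕ):ℝ) *
                Real.exp (-(K/2) * Real.log ((Sgrowth η j + n:ℕ):ℝ) ^ (1+2*η))) := by
            rw [show -K * Real.log ((Sgrowth η j + n:ℕ):ℝ) ^ (1+2*η) =
              -(K/2) * Real.log ((Sgrowth η j + n:ℕ):ℝ) ^ (1+2*η) +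
              -(K/2) * Real.log ((Sgrowth η j + n:ℕ):ℝ) ^ (1+2*η) by ring, Real.exp_add]
            ring
        _ ≤ _ := by
            apply mul_le_mul_of_nonneg_right
              (Real.exp_le_exp.2 (by nlinarith)) (by positivity)
    have hsum_g_shift : Summable (fun n : ℕ => ((Sgrowth η j + n:ℕ):ℝ) *
        Real.exp (-(K/2) * Real.log ((Sgrowth η j + n:ℕ):ℝ) ^ (1+2*η))) := by
      have h := (summable_nat_add_iff (Sgrowth η j)).2 hg
      have e : (fun n : ℕ => ((Sgrowth η j + n:ℕ):ℝ) *
          Real.exp (-(K/2) * Real.log ((Sgrowth η j + n:ℕ):ℝ) ^ (1+2*η))) =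
          fun n : ℕ => ((n + Sgrowth η j :ℕ):ℝ) *
          Real.exp (-(K/2) * Real.log ((n + Sgrowth η j :ℕ):ℝ) ^ (1+2*η)) := by
        funext n; rw [Nat.add_comm]
      rw [e]; exact h
    calc (∑' n : ℕ, termG b β ε (Sgrowth η j + n))
        ≤ ∑' n : ℕ, Real.exp (-(K/2) * (xg η j - 1) ^ (1+2*η)) *
            (((Sgrowth η j + n : ℕ):ℝ) *
              Real.exp (-(K/2) * Real.log ((Sgrowth η j + n : ℕ):ℝ) ^ (1+2*η))) :=
          Summable.tsum_le_tsum hpt (part1 _) (hsum_g_shift.mul_left _)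
      _ = Real.exp (-(K/2) * (xg η j - 1) ^ (1+2*η)) *
            ∑' n : ℕ, (((Sgrowth η j + n : ℕ):ℝ) *
              Real.exp (-(K/2) * Real.log ((Sgrowth η j + n : ℕ):ℝ) ^ (1+2*η))) :=
          tsum_mul_left
      _ ≤ Real.exp (-(K/2) * (xg η j - 1) ^ (1+2*η)) * C := by
          apply mul_le_mul_of_nonneg_left _ (Real.exp_nonneg _)
          have h6 := tsum_comp_le_tsum_of_inj hg (fun a => by positivity)
            (add_right_injective (Sgrowth η j))
          have e : ((fun n : ℕ => (n:ℝ) * Real.exp (-(K/2) * Real.log n ^ (1+2*η))) ∘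
              (fun n : ℕ => Sgrowth η j + n)) = fun n : ℕ => ((Sgrowth η j + n:ℕ):ℝ) *
              Real.exp (-(K/2) * Real.log ((Sgrowth η j + n:ℕ):ℝ) ^ (1+2*η)) := rfl
          rw [e] at h6
          exact h6
  -- eventual facts
  have hηlim : Tendsto (fun m : ℕ => Real.log m ^ η) atTop atTop :=
    (tendsto_rpow_atTop hη).comp (Real.tendsto_log_atTop.comp tendsto_natCast_atTop_atTop)
  have hxlim : Tendsto (fun m : ℕ => xg η m) atTop atTop := by
    apply (tendsto_rpow_atTop (show 0 < (1:ℝ)/(1+2*η) by positivity)).comp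
    apply tendsto_atTop_mono' atTop _ tendsto_natCast_atTop_atTop
    filter_upwards [hηlim.eventually_ge_atTop 1] with m h1
    have h0 : (0:ℝ) ≤ (m:ℝ) := Nat.cast_nonneg m
    show (m:ℝ) ≤ (m:ℝ) * Real.log m ^ η
    nlinarith
  set M := L + (1+η)^(1+η) * L + 1 with hMdef
  have hbig : ∀ᶠ m : ℕ in atTop,
      (m:ℝ) * L + Real.log (m:ℝ) ^ (1+η) * L + (m:ℝ) ≤
        (K/2) * (xg η m - 1) ^ (1+2*η) ∧ 2 ≤ xg η m := by
    filter_upwards [hxlim.eventually_ge_atTop 2,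
      hηlim.eventually_ge_atTop (M * 2^((2:ℝ)+2*η) / K), eventually_ge_atTop 1]
      with m hx2 hc hm1
    refine ⟨?_, hx2⟩
    have hm1' : (1:ℝ) ≤ (m:ℝ) := by exact_mod_cast hm1
    have h1 : Real.log (m:ℝ) ^ (1+η) ≤ (1+η)^(1+η) * m := log_rpow_le η hη _ hm1'
    have hLHS : (m:ℝ)*L + Real.log (m:ℝ)^(1+η)*L + (m:ℝ) ≤ (m:ℝ) * M := by
      rw [hMdef]; nlinarith [hL.le]
    have h2 : (xg η m / 2) ^ (1+2*η) ≤ (xg η m - 1) ^ (1+2*η) :=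
      Real.rpow_le_rpow (by linarith) (by linarith) (by linarith)
    have h3 : (xg η m / 2) ^ (1+2*η) = (m:ℝ) * Real.log m ^ η / 2 ^ ((1:ℝ)+2*η) := by
      rw [Real.div_rpow (by linarith : (0:ℝ) ≤ xg η m) (by norm_num : (0:ℝ) ≤ 2)]
      congr 1
      show (((m:ℝ) * Real.log m ^ η) ^ ((1:ℝ)/(1+2*η))) ^ (1+2*η) = (m:ℝ) * Real.log m ^ η
      rw [← Real.rpow_mul (by positivity : (0:ℝ) ≤ (m:ℝ) * Real.log m ^ η),
        one_div, inv_mul_cancel₀ (by positivity : (1+2*η) ≠ 0), Real.rpow_one]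
    have h4 : (m:ℝ) * M ≤ (K/2) * ((m:ℝ) * Real.log m ^ η / 2 ^ ((1:ℝ)+2*η)) := by
      have hP : (0:ℝ) < (2:ℝ) ^ ((1:ℝ)+2*η) := by positivity
      have e2 : (2:ℝ) ^ ((2:ℝ)+2*η) = 2 * 2 ^ ((1:ℝ)+2*η) := by
        rw [show (2:ℝ)+2*η = 1 + (1+2*η) by ring, Real.rpow_add two_pos, Real.rpow_one]
      have hKt : M * 2 ^ ((2:ℝ)+2*η) ≤ K * Real.log m ^ η := by
        rw [div_le_iff₀ hK] at hc; linarith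
      have hM' : M ≤ K * Real.log m ^ η / (2 * 2^((1:ℝ)+2*η)) := by
        rw [le_div_iff₀ (by positivity)]
        calc M * (2*2^((1:ℝ)+2*η)) = M * 2^((2:ℝ)+2*η) := by rw [e2]
          _ ≤ K * Real.log m ^ η := hKt
      calc (m:ℝ) * M ≤ (m:ℝ) * (K * Real.log m ^ η / (2 * 2^((1:ℝ)+2*η))) :=
            mul_le_mul_of_nonneg_left hM' (Nat.cast_nonneg m)
        _ = (K/2) * ((m:ℝ) * Real.log m ^ η / 2 ^ ((1:ℝ)+2*η)) := by ring
    have h5 := mul_le_mul_of_nonneg_left h2 (by positivity : (0:ℝ) ≤ K/2)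
    rw [h3] at h5
    exact le_trans hLHS (le_trans h4 h5)
  -- conclude
  apply summable_of_isBigO_nat Real.summable_exp_neg_nat
  rw [Asymptotics.isBigO_iff]
  refine ⟨C, ?_⟩
  filter_upwards [(tendsto_add_atTop_nat 2).eventually hbig] with j hj
  obtain ⟨hineq, hx2⟩ := hj
  have hT := tail_bound (j+2) hx2
  have hTnn : 0 ≤ ∑' n : ℕ, termG b β ε (Sgrowth η (j+2) + n) :=
    tsum_nonneg fun n => hterm_nonneg _
  have hFnn : 0 ≤ (b:ℝ)^(j+2) * (b:ℝ)^(Real.log ((j:ℝ)+2)^(1+η)) *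
      ∑' n : ℕ, termG b β ε (Sgrowth η (j+2) + n) :=
    mul_nonneg (mul_nonneg (pow_nonneg hbpos.le _) (Real.rpow_nonneg hbpos.le _)) hTnn
  rw [Real.norm_eq_abs, Real.norm_eq_abs, abs_of_nonneg hFnn,
    abs_of_pos (Real.exp_pos _)]
  have hbpow : (b:ℝ)^(j+2) = Real.exp (((j:ℝ)+2) * L) := by
    have h := Real.exp_nat_mul L (j+2)
    rw [Real.exp_log hbpos] at h
    rw [← h]; push_cast; ring_nf
  have hrpow : (b:ℝ) ^ (Real.log ((j:ℝ)+2) ^ (1+η)) =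
      Real.exp (Real.log ((j:ℝ)+2)^(1+η) * L) := by
    rw [Real.rpow_def_of_pos hbpos, mul_comm]
  push_cast at hineq
  calc (b:ℝ)^(j+2) * (b:ℝ)^(Real.log ((j:ℝ)+2)^(1+η)) *
        ∑' n : ℕ, termG b β ε (Sgrowth η (j+2) + n)
      ≤ (b:ℝ)^(j+2) * (b:ℝ)^(Real.log ((j:ℝ)+2)^(1+η)) *
        (Real.exp (-(K/2) * (xg η (j+2) - 1) ^ (1 + 2*η)) * C) :=
        mul_le_mul_of_nonneg_left hT (by positivity)
    _ = C * Real.exp (((j:ℝ)+2) * L + Real.log ((j:ℝ)+2)^(1+η) * L +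
          -(K/2) * (xg η (j+2) - 1) ^ (1 + 2*η)) := by
        rw [hbpow, hrpow, Real.exp_add, Real.exp_add]; ring
    _ ≤ C * Real.exp (-(j:ℝ)) := by
        apply mul_le_mul_of_nonneg_left _ hC0
        apply Real.exp_le_exp.2
        linarith
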